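/- arXiv:1211.4953 — 2 statements merged into one kernel-verified Lean document; each statement's English description precedes it below -/
import Mathlib

section
/- Let f₁, …, f_m : X → (-∞, +∞] be proper lower semicontinuous convex functions on a real Banach space X with ⋂ᵢ dom fᵢ ≠ ∅. If (∑ᵢ fᵢ)* = f₁* □ ⋯ □ f_m* on X*, then for every x ∈ X and ε ≥ 0, ∂_ε(f₁+⋯+f_m)(x) equals the intersection over η > 0 of the unions, over ε₁,…,ε_m ≥ 0 with ∑ᵢ εᵢ = ε + η, of ∂_{ε₁}f₁(x) + ⋯ + ∂_{ε_m}f_m(x). -/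
open Pointwise Topology Set

noncomputable section

variable {X : Type*} [NormedAddCommGroup X] [NormedSpace ℝ X]

/-- `f` is proper: never `-∞` and finite somewhere. -/
def EProper (f : X → EReal) : Prop := (∀ x, f x ≠ ⊥) ∧ ∃ x, f x ≠ ⊤

/-- effective domain of `f`. -/
def edom (f : X → EReal) : Set X := {x | f x < ⊤}

/-- convexity for extended-real-valued functions. -/
def EConvex (f : X → EReal) : Prop :=
  ∀ x y : X, ∀ t : ℝ, 0 ≤ t → t ≤ 1 →
    f (t • x + (1 - t) • y) ≤ (t : EReal) * f x + ((1 - t : ℝ) : EReal) * f y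

/-- the ε-subdifferential of `f` at `x`, a subset of the weak* dual. -/
def epsSubdiff (f : X → EReal) (ε : ℝ) (x : X) : Set (WeakDual ℝ X) :=
  {p | f x ≠ ⊤ ∧ f x ≠ ⊥ ∧ ∀ y : X, (p (y - x) : EReal) + f x ≤ f y + (ε : EReal)}

/-- the (exact) subdifferential of `f` at `x`. -/
def subdiff (f : X → EReal) (x : X) : Set (WeakDual ℝ X) := epsSubdiff f 0 x

/-- the Fenchel conjugate of `f`. -/
def fconj (f : X → EReal) (p : WeakDual ℝ X) : EReal := ⨆ x : X, (p x : EReal) - f x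

/-- the infimal convolution of finitely many functions on the dual. -/
def infConv {m : ℕ} (g : Fin m → WeakDual ℝ X → EReal) (p : WeakDual ℝ X) : EReal :=
  ⨅ (y : Fin m → WeakDual ℝ X) (_ : ∑ i, y i = p), ∑ i, g i (y i)

/-- exactness (attainment) of the infimal convolution at `p`. -/
def infConvExactAt {m : ℕ} (g : Fin m → WeakDual ℝ X → EReal) (p : WeakDual ℝ X) : Prop :=
  ∃ y : Fin m → WeakDual ℝ X, ∑ i, y i = p ∧ infConv g p = ∑ i, g i (y i)

/-- the epigraph of the Fenchel conjugate of `f`, in `X* × ℝ`. -/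
def epiConj (f : X → EReal) : Set ((WeakDual ℝ X) × ℝ) :=
  {q | fconj f q.1 ≤ (q.2 : EReal)}

private lemma ecoe_sum {ι : Type*} (s : Finset ι) (g : ι → ℝ) :
    ((∑ i ∈ s, g i : ℝ) : EReal) = ∑ i ∈ s, (g i : EReal) :=
  map_sum (⟨⟨Real.toEReal, EReal.coe_zero⟩, EReal.coe_add⟩ : ℝ →+ EReal) g s

private lemma eval_sum {m : ℕ} (x : X) (y : Fin m → WeakDual ℝ X) :
    (∑ i, y i) x = ∑ i, y i x :=
  map_sum (⟨⟨fun p : WeakDual ℝ X => p x, rfl⟩, fun _ _ => rfl⟩ : WeakDual ℝ X →+ ℝ) y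
    Finset.univ

private lemma esum_ne_bot {ι : Type*} (s : Finset ι) (c : ι → EReal) :
    (∀ i ∈ s, c i ≠ ⊥) → ∑ i ∈ s, c i ≠ ⊥ := by
  classical
  induction s using Finset.induction_on with
  | empty => intro _; simp
  | @insert a s hi ih =>
    intro h
    rw [Finset.sum_insert hi]
    intro hbot
    rcases EReal.add_eq_bot_iff.1 hbot with h1 | h1
    · exact h _ (Finset.mem_insert_self _ _) h1
    · exact ih (fun i hmem => h i (Finset.mem_insert_of_mem hmem)) h1

private lemma esum_eq_top {ι : Type*} (s : Finset ι) (c : ι → EReal) (j : ι) (hj : j ∈ s)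
    (hjt : c j = ⊤) (hb : ∀ i ∈ s, c i ≠ ⊥) : ∑ i ∈ s, c i = ⊤ := by
  classical
  rw [← Finset.add_sum_erase s c hj, hjt]
  exact EReal.top_add_of_ne_bot
    (esum_ne_bot _ _ fun i hi => hb i (Finset.mem_of_mem_erase hi))

private lemma epsSubdiff_mono {f : X → EReal} {x : X} {ε ε' : ℝ} (h : ε ≤ ε') :
    epsSubdiff f ε x ⊆ epsSubdiff f ε' x := by
  rintro p ⟨h1, h2, h3⟩
  exact ⟨h1, h2, fun y => (h3 y).trans (add_le_add_right (EReal.coe_le_coe_iff.2 h) _)⟩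

theorem stmt4 {X : Type*} [NormedAddCommGroup X] [NormedSpace ℝ X] [CompleteSpace X]
    {m : ℕ} (hm : 1 ≤ m) (f : Fin m → X → EReal)
    (hp : ∀ i, EProper (f i)) (hl : ∀ i, LowerSemicontinuous (f i)) (hc : ∀ i, EConvex (f i))
    (hdom : (⋂ i, edom (f i)).Nonempty)
    (heq : ∀ p : WeakDual ℝ X,
      fconj (fun x => ∑ i, f i x) p = infConv (fun i => fconj (f i)) p) :
    ∀ (x : X) (ε : ℝ), 0 ≤ ε →
      epsSubdiff (fun y => ∑ i, f i y) ε x =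
        ⋂ η ∈ Set.Ioi (0 : ℝ),
          ⋃ (e : Fin m → ℝ) (_ : (∀ i, 0 ≤ e i) ∧ ∑ i, e i = ε + η),
            ∑ i, epsSubdiff (f i) (e i) x := by
  intro x ε hε
  have hfib : ∀ i, ∀ z : X, f i z ≠ ⊥ := fun i => (hp i).1
  ext p
  simp only [Set.mem_iInter, Set.mem_Ioi]
  constructor
  · rintro ⟨hft, hfb, hsub⟩
    have hft' : ∑ i, f i x ≠ ⊤ := hft
    have hfit : ∀ i, f i x ≠ ⊤ := by
      intro i h
      exact hft' (esum_eq_top _ _ i (Finset.mem_univ i) h fun j _ => hfib j x)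
    set a : Fin m → ℝ := fun i => (f i x).toReal with ha
    have hfa : ∀ i, f i x = ((a i : ℝ) : EReal) :=
      fun i => (EReal.coe_toReal (hfit i) (hfib i x)).symm
    have hsumx : ∑ i, f i x = ((∑ i, a i : ℝ) : EReal) := by
      rw [ecoe_sum]; exact Finset.sum_congr rfl fun i _ => hfa i
    have hconj : infConv (fun i => fconj (f i)) p ≤ ((p x + ε - ∑ i, a i : ℝ) : EReal) := by
      rw [← heq]
      apply iSup_le
      intro z
      show ((p z : ℝ) : EReal) - (∑ i, f i z) ≤ ((p x + ε - ∑ i, a i : ℝ) : EReal)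
      have hz := hsub z
      simp only at hz
      rw [hsumx] at hz
      rcases eq_or_ne (∑ i, f i z) ⊤ with hzt | hzt
      · rw [hzt, EReal.sub_top]
        exact bot_le
      · have hzb : ∑ i, f i z ≠ ⊥ := esum_ne_bot _ _ fun i _ => hfib i z
        obtain ⟨b, hb⟩ : ∃ b : ℝ, ∑ i, f i z = (b : EReal) :=
          ⟨_, (EReal.coe_toReal hzt hzb).symm⟩
        rw [hb] at hz ⊢
        rw [map_sub, ← EReal.coe_add, ← EReal.coe_add, EReal.coe_le_coe_iff] at hz
        rw [← EReal.coe_sub, EReal.coe_le_coe_iff]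
        linarith
    intro η hη
    have hlt : infConv (fun i => fconj (f i)) p
        < ((p x + ε - ∑ i, a i + η : ℝ) : EReal) :=
      lt_of_le_of_lt hconj (EReal.coe_lt_coe_iff.2 (by linarith))
    rw [infConv] at hlt
    obtain ⟨y, hlt⟩ := iInf_lt_iff.1 hlt
    obtain ⟨hyp, hlt⟩ := iInf_lt_iff.1 hlt
    have hFY : ∀ i, ((y i x : ℝ) : EReal) - f i x ≤ fconj (f i) (y i) :=
      fun i => le_iSup (fun z => ((y i z : ℝ) : EReal) - f i z) x
    have hcb : ∀ i, fconj (f i) (y i) ≠ ⊥ := by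
      intro i h
      have := hFY i
      rw [h, hfa i, ← EReal.coe_sub, le_bot_iff] at this
      exact EReal.coe_ne_bot _ this
    have hst : ∑ i, fconj (f i) (y i) ≠ ⊤ := (hlt.trans (EReal.coe_lt_top _)).ne
    have hct : ∀ i, fconj (f i) (y i) ≠ ⊤ := by
      intro i h
      exact hst (esum_eq_top _ _ i (Finset.mem_univ i) h fun j _ => hcb j)
    set r : Fin m → ℝ := fun i => (fconj (f i) (y i)).toReal with hr
    have hcr : ∀ i, fconj (f i) (y i) = ((r i : ℝ) : EReal) :=
      fun i => (EReal.coe_toReal (hct i) (hcb i)).symm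
    have hsumr : (∑ i, r i) < p x + ε - ∑ i, a i + η := by
      have : ∑ i, fconj (f i) (y i) = ((∑ i, r i : ℝ) : EReal) := by
        rw [ecoe_sum]; exact Finset.sum_congr rfl fun i _ => hcr i
      rw [this, EReal.coe_lt_coe_iff] at hlt
      exact hlt
    set e' : Fin m → ℝ := fun i => r i + a i - y i x with he'
    have he'0 : ∀ i, 0 ≤ e' i := by
      intro i
      have := hFY i
      rw [hfa i, hcr i, ← EReal.coe_sub, EReal.coe_le_coe_iff] at this
      simp only [he']
      linarith
    have hmem : ∀ i, y i ∈ epsSubdiff (f i) (e' i) x := by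
      intro i
      refine ⟨hfit i, hfib i x, fun z => ?_⟩
      have hFz : ((y i z : ℝ) : EReal) - f i z ≤ ((r i : ℝ) : EReal) :=
        (le_iSup (fun w => ((y i w : ℝ) : EReal) - f i w) z).trans (hcr i).le
      rw [hfa i, map_sub, ← EReal.coe_add]
      rcases eq_or_ne (f i z) ⊤ with hzt | hzt
      · rw [hzt, EReal.top_add_coe]
        exact le_top
      · obtain ⟨b, hb⟩ : ∃ b : ℝ, f i z = (b : EReal) :=
          ⟨_, (EReal.coe_toReal hzt (hfib i z)).symm⟩
        rw [hb] at hFz ⊢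
        rw [← EReal.coe_sub, EReal.coe_le_coe_iff] at hFz
        rw [← EReal.coe_add, EReal.coe_le_coe_iff]
        simp only [he']
        linarith
    have hsumyx : ∑ i, y i x = p x := by rw [← eval_sum x y, hyp]
    have hsume' : ∑ i, e' i < ε + η := by
      simp only [he']
      rw [Finset.sum_sub_distrib, Finset.sum_add_distrib, hsumyx]
      linarith
    set s : ℝ := ε + η - ∑ i, e' i with hs
    have hs0 : 0 ≤ s := by simp only [hs]; linarith
    set e : Fin m → ℝ := fun i => e' i + if i = ⟨0, hm⟩ then s else 0 with he
    have he0 : ∀ i, 0 ≤ e i := by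
      intro i
      simp only [he]
      split <;> [linarith [he'0 i]; simpa using he'0 i]
    have hesum : ∑ i, e i = ε + η := by
      simp only [he]
      rw [Finset.sum_add_distrib]
      have : ∑ i : Fin m, (if i = ⟨0, hm⟩ then s else 0) = s := by
        simp [Finset.sum_ite_eq']
      rw [this, hs]
      ring
    refine Set.mem_iUnion.2 ⟨e, Set.mem_iUnion.2 ⟨⟨he0, hesum⟩, ?_⟩⟩
    refine (Set.mem_fintype_sum _ _).2 ⟨y, fun i => ?_, hyp⟩
    refine epsSubdiff_mono ?_ (hmem i)
    simp only [he]
    split <;> [linarith; linarith]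
  · intro h
    have hU : ∀ η, 0 < η → ∃ (e : Fin m → ℝ) (y : Fin m → WeakDual ℝ X),
        (∀ i, 0 ≤ e i) ∧ ∑ i, e i = ε + η ∧ (∀ i, y i ∈ epsSubdiff (f i) (e i) x) ∧
          ∑ i, y i = p := by
      intro η hη
      have hh := h η hη
      simp only [Set.mem_iUnion] at hh
      obtain ⟨e, ⟨he0, hesum⟩, hmem⟩ := hh
      obtain ⟨y, hy, hyp⟩ := (Set.mem_fintype_sum _ _).1 hmem
      exact ⟨e, y, he0, hesum, fun i => hy i, hyp⟩
    obtain ⟨e₁, y₁, -, -, hm₁, -⟩ := hU 1 one_pos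
    have hfit : ∀ i, f i x ≠ ⊤ := fun i => (hm₁ i).1
    set a : Fin m → ℝ := fun i => (f i x).toReal with ha
    have hfa : ∀ i, f i x = ((a i : ℝ) : EReal) :=
      fun i => (EReal.coe_toReal (hfit i) (hfib i x)).symm
    have hsumx : ∑ i, f i x = ((∑ i, a i : ℝ) : EReal) := by
      rw [ecoe_sum]; exact Finset.sum_congr rfl fun i _ => hfa i
    refine ⟨?_, ?_, fun z => ?_⟩
    · show ∑ i, f i x ≠ ⊤
      rw [hsumx]; exact EReal.coe_ne_top _
    · show ∑ i, f i x ≠ ⊥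
      rw [hsumx]; exact EReal.coe_ne_bot _
    · show ((p (z - x) : ℝ) : EReal) + ∑ i, f i x ≤ ∑ i, f i z + (ε : EReal)
      have key : ∀ η, 0 < η → ((p (z - x) : ℝ) : EReal) + ∑ i, f i x
          ≤ ∑ i, f i z + ((ε + η : ℝ) : EReal) := by
        intro η hη
        obtain ⟨e, y, he0, hesum, hmem, hyp⟩ := hU η hη
        have hi : ∀ i, ((y i (z - x) : ℝ) : EReal) + f i x ≤ f i z + ((e i : ℝ) : EReal) :=
          fun i => (hmem i).2.2 z
        have hsle := Finset.sum_le_sum (fun i (_ : i ∈ Finset.univ) => hi i)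
        rw [Finset.sum_add_distrib, Finset.sum_add_distrib, ← ecoe_sum, ← ecoe_sum] at hsle
        have hyzx : ∑ i, y i (z - x) = p (z - x) := by rw [← eval_sum (z - x) y, hyp]
        rw [hyzx, hesum] at hsle
        exact hsle
      rcases eq_or_ne (∑ i, f i z) ⊤ with hzt | hzt
      · rw [hzt, EReal.top_add_coe]
        exact le_top
      · have hzb : ∑ i, f i z ≠ ⊥ := esum_ne_bot _ _ fun i _ => hfib i z
        obtain ⟨b, hb⟩ : ∃ b : ℝ, ∑ i, f i z = (b : EReal) :=
          ⟨_, (EReal.coe_toReal hzt hzb).symm⟩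
        rw [hb, hsumx, ← EReal.coe_add, ← EReal.coe_add, EReal.coe_le_coe_iff]
        refine le_of_forall_pos_le_add fun η hη => ?_
        have hk := key η hη
        rw [hb, hsumx, ← EReal.coe_add, ← EReal.coe_add, EReal.coe_le_coe_iff] at hk
        linarith
end
end

section
/- Let f, g : X → (-∞, +∞] be proper lower semicontinuous convex functions on a real Banach space X with dom f ∩ dom g ≠ ∅. If for every x ∈ dom f ∩ dom g and every ε > 0 the set ∂_ε f(x) + ∂_ε g(x) is weak* closed, then (f+g)* = f* □ g* on X*, and consequently inf_X (f+g) = sup_{x* ∈ X*} { −f*(x*) − g*(−x*) }. -/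
open Pointwise Topology Set

noncomputable section

variable {X : Type*} [NormedAddCommGroup X] [NormedSpace ℝ X]

/-! ### Auxiliary lemmas -/

section Aux

lemma ereal_cases (a : EReal) (ha : a ≠ ⊥) : a = ⊤ ∨ ∃ r : ℝ, a = (r : EReal) := by
  by_cases h : a = ⊤
  · exact Or.inl h
  · exact Or.inr ⟨a.toReal, (EReal.coe_toReal h ha).symm⟩

lemma ereal_neg_iInf {ι : Sort*} (h : ι → EReal) : -(⨅ i, h i) = ⨆ i, -(h i) := by
  apply le_antisymm
  · rw [EReal.neg_le]
    refine le_iInf fun i => ?_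
    calc -(⨆ i, -(h i)) ≤ -(-(h i)) := EReal.neg_le_neg_iff.mpr (le_iSup (fun i => -(h i)) i)
      _ = h i := neg_neg _
  · exact iSup_le fun i => EReal.neg_le_neg_iff.mpr (iInf_le _ i)

lemma ereal_neg_add {a b : EReal} (ha : a ≠ ⊥) (hb : b ≠ ⊥) : -(a + b) = -a + -b := by
  induction a <;> induction b <;>
    simp_all [← EReal.coe_add, ← EReal.coe_neg] <;> ring

variable {X : Type*} [NormedAddCommGroup X] [NormedSpace ℝ X]

lemma le_fconj (f : X → EReal) (p : WeakDual ℝ X) (x : X) :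
    (p x : EReal) - f x ≤ fconj f p := le_iSup (fun x => (p x : EReal) - f x) x

lemma young_real {f : X → EReal} {q : WeakDual ℝ X} {x : X} {rx t : ℝ}
    (hx : f x = (rx : EReal)) (ht : fconj f q ≤ (t : EReal)) : q x - rx ≤ t := by
  have h := (le_fconj f q x).trans ht
  rw [hx, ← EReal.coe_sub] at h
  exact EReal.coe_le_coe_iff.mp h

lemma fconj_le_coe {f : X → EReal} (hfb : ∀ x, f x ≠ ⊥) {q : WeakDual ℝ X} {c : ℝ}
    (h : ∀ x (rx : ℝ), f x = (rx : EReal) → q x - rx ≤ c) : fconj f q ≤ (c : EReal) := by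
  refine iSup_le fun x => ?_
  rcases ereal_cases (f x) (hfb x) with hx | ⟨rx, hx⟩
  · rw [hx, EReal.sub_top]; exact bot_le
  · rw [hx, ← EReal.coe_sub]; exact EReal.coe_le_coe_iff.mpr (h x rx hx)

lemma fconj_ne_bot {f : X → EReal} {x0 : X} {r0 : ℝ} (hx0 : f x0 = (r0 : EReal))
    (p : WeakDual ℝ X) : fconj f p ≠ ⊥ := by
  intro h
  have h2 := le_fconj f p x0
  rw [hx0, ← EReal.coe_sub, h, le_bot_iff] at h2
  exact (EReal.coe_ne_bot _) h2

lemma le_coe_of_forall_lt {x : EReal} {r : ℝ}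
    (h : ∀ ε : ℝ, 0 < ε → x ≤ ((r + ε : ℝ) : EReal)) : x ≤ (r : EReal) := by
  by_contra hc
  push_neg at hc
  rcases EReal.exists_between_coe_real hc with ⟨b, hrb, hbx⟩
  have hrb' := EReal.coe_lt_coe_iff.mp hrb
  have h2 := h ((b - r) / 2) (by linarith)
  have h3 : ((r + (b - r) / 2 : ℝ) : EReal) < (b : EReal) :=
    EReal.coe_lt_coe_iff.mpr (by linarith)
  exact absurd (h2.trans_lt (h3.trans hbx)) (lt_irrefl x)

/-! ### The epigraph of `f` in `X × ℝ` and separation -/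

def repi (f : X → EReal) : Set (X × ℝ) := {w | f w.1 ≤ (w.2 : EReal)}

lemma isClosed_repi {f : X → EReal} (hfb : ∀ x, f x ≠ ⊥) (hfl : LowerSemicontinuous f) :
    IsClosed (repi f) := by
  rw [← isOpen_compl_iff, isOpen_iff_mem_nhds]
  rintro ⟨x, t⟩ hw
  simp only [mem_compl_iff, repi, mem_setOf_eq, not_le] at hw
  obtain ⟨t', ht1, ht2⟩ : ∃ t' : ℝ, t < t' ∧ (t' : EReal) < f x := by
    rcases ereal_cases (f x) (hfb x) with hx | ⟨rx, hx⟩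
    · exact ⟨t + 1, by linarith, hx ▸ EReal.coe_lt_top _⟩
    · rw [hx] at hw ⊢
      have h := EReal.coe_lt_coe_iff.mp hw
      exact ⟨(t + rx) / 2, by linarith, EReal.coe_lt_coe_iff.mpr (by linarith)⟩
  have h1 : {y : X | (t' : EReal) < f y} ∈ 𝓝 x := hfl x _ ht2
  have h2 : Set.Iio t' ∈ 𝓝 t := Iio_mem_nhds ht1
  refine Filter.mem_of_superset (prod_mem_nhds h1 h2) ?_
  rintro ⟨y, s⟩ ⟨hy, hs⟩
  simp only [mem_compl_iff, repi, mem_setOf_eq, not_le]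
  exact lt_trans (EReal.coe_lt_coe_iff.mpr hs) hy

lemma convex_repi {f : X → EReal} (hfb : ∀ x, f x ≠ ⊥) (hfc : EConvex f) :
    Convex ℝ (repi f) := by
  rintro ⟨x, tx⟩ hx ⟨y, ty⟩ hy a b ha hb hab
  simp only [repi, mem_setOf_eq] at hx hy
  have hb' : b = 1 - a := by linarith
  subst hb'
  show f (a • x + (1 - a) • y) ≤ ((a * tx + (1 - a) * ty : ℝ) : EReal)
  refine le_trans (hfc x y a ha (by linarith)) ?_
  have h1 : (a : EReal) * f x ≤ ((a * tx : ℝ) : EReal) := by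
    rw [EReal.coe_mul]
    exact mul_le_mul_of_nonneg_left hx (by exact_mod_cast ha)
  have h2 : ((1 - a : ℝ) : EReal) * f y ≤ (((1 - a) * ty : ℝ) : EReal) := by
    rw [EReal.coe_mul]
    exact mul_le_mul_of_nonneg_left hy (by exact_mod_cast hb)
  calc (a : EReal) * f x + ((1 - a : ℝ) : EReal) * f y
      ≤ ((a * tx : ℝ) : EReal) + (((1 - a) * ty : ℝ) : EReal) := add_le_add h1 h2
    _ = ((a * tx + (1 - a) * ty : ℝ) : EReal) := by rw [← EReal.coe_add]

lemma sep_epi {f : X → EReal} (hf : EProper f) (hfl : LowerSemicontinuous f)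
    (hfc : EConvex f) {z : X} {b : ℝ} (hb : (b : EReal) < f z) :
    ∃ (q0 : WeakDual ℝ X) (s u : ℝ), s ≤ 0 ∧
      (∀ x (rx : ℝ), f x = (rx : EReal) → q0 x + s * rx < u) ∧ u < q0 z + s * b := by
  have hcl := isClosed_repi hf.1 hfl
  have hcv := convex_repi hf.1 hfc
  have hzb : ((z, b) : X × ℝ) ∉ repi f := by
    simp only [repi, mem_setOf_eq, not_le]; exact hb
  obtain ⟨Φ, u, hΦ1, hΦ2⟩ := geometric_hahn_banach_closed_point hcv hcl hzb
  set s : ℝ := Φ (0, 1) with hs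
  have hdec : ∀ (x : X) (t : ℝ), Φ (x, t) = Φ (x, 0) + s * t := by
    intro x t
    have h : ((x, t) : X × ℝ) = (x, 0) + t • ((0 : X), (1 : ℝ)) := by simp [Prod.ext_iff]
    rw [h, map_add, map_smul, smul_eq_mul, mul_comm]
  set q0 : WeakDual ℝ X := Φ.comp (ContinuousLinearMap.inl ℝ X ℝ) with hq0
  have hq0app : ∀ x : X, q0 x = Φ (x, 0) := fun x => rfl
  have key : ∀ (x : X) (rx : ℝ), f x = (rx : EReal) → q0 x + s * rx < u := by
    intro x rx hx
    have hmem : ((x, rx) : X × ℝ) ∈ repi f := by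
      show f x ≤ ((rx : ℝ) : EReal)
      rw [hx]
    have h := hΦ1 _ hmem
    rw [hdec x rx] at h
    rw [hq0app]; linarith
  have hzineq : u < q0 z + s * b := by
    have h := hΦ2
    rw [hdec z b] at h
    rw [hq0app]; linarith
  obtain ⟨x1, hx1t⟩ := hf.2
  rcases ereal_cases (f x1) (hf.1 x1) with h | ⟨r1, hr1⟩
  · exact absurd h hx1t
  have hs0 : s ≤ 0 := by
    by_contra hsp
    push_neg at hsp
    set R : ℝ := max r1 ((u - q0 x1) / s + 1) with hR
    have hmem : ((x1, R) : X × ℝ) ∈ repi f := by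
      show f x1 ≤ ((R : ℝ) : EReal)
      rw [hr1]
      exact EReal.coe_le_coe_iff.mpr (le_max_left _ _)
    have h3 := hΦ1 _ hmem
    rw [hdec x1 R, ← hq0app x1] at h3
    have hge : (u - q0 x1) / s + 1 ≤ R := le_max_right _ _
    have hdiv : s * ((u - q0 x1) / s) = u - q0 x1 := mul_div_cancel₀ _ (ne_of_gt hsp)
    nlinarith [mul_le_mul_of_nonneg_left hge hsp.le]
  exact ⟨q0, s, u, hs0, key, hzineq⟩

lemma conj_bound_of_neg {f : X → EReal} (hfb : ∀ x, f x ≠ ⊥) {q0 : WeakDual ℝ X} {s u : ℝ}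
    (hs : s < 0) (h : ∀ x (rx : ℝ), f x = (rx : EReal) → q0 x + s * rx < u) :
    fconj f ((-s)⁻¹ • q0) ≤ (((-s)⁻¹ * u : ℝ) : EReal) := by
  refine fconj_le_coe hfb ?_
  intro x rx hx
  have h1 := h x rx hx
  have hpos : 0 < (-s)⁻¹ := inv_pos.mpr (by linarith)
  have hsne : s ≠ 0 := ne_of_lt hs
  have hinv : (-s)⁻¹ * s = -1 := by
    rw [inv_mul_eq_div, div_eq_iff (show (-s) ≠ 0 by linarith)]; ring
  have h4 : (-s)⁻¹ * (q0 x + s * rx) = (-s)⁻¹ * q0 x - rx := by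
    calc (-s)⁻¹ * (q0 x + s * rx) = (-s)⁻¹ * q0 x + ((-s)⁻¹ * s) * rx := by ring
      _ = (-s)⁻¹ * q0 x - rx := by rw [hinv]; ring
  have h2 := mul_le_mul_of_nonneg_left h1.le hpos.le
  rw [h4] at h2
  show (-s)⁻¹ * q0 x - rx ≤ (-s)⁻¹ * u
  exact h2

lemma fm0 {f : X → EReal} (hf : EProper f) (hfl : LowerSemicontinuous f) (hfc : EConvex f) :
    ∃ (q : WeakDual ℝ X) (c : ℝ), fconj f q ≤ (c : EReal) := by
  obtain ⟨x1, hx1⟩ := hf.2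
  rcases ereal_cases (f x1) (hf.1 x1) with h | ⟨r1, hr1⟩
  · exact absurd h hx1
  have hb : ((r1 - 1 : ℝ) : EReal) < f x1 := by
    rw [hr1]; exact EReal.coe_lt_coe_iff.mpr (by linarith)
  obtain ⟨q0, s, u, hs0, hkey, hz⟩ := sep_epi hf hfl hfc hb
  have hs : s < 0 := by
    rcases lt_or_eq_of_le hs0 with h | h
    · exact h
    · exfalso
      have h1 := hkey x1 r1 hr1
      rw [h, zero_mul, add_zero] at h1
      rw [h, zero_mul, add_zero] at hz
      linarith
  exact ⟨_, _, conj_bound_of_neg hf.1 hs hkey⟩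

lemma fm {f : X → EReal} (hf : EProper f) (hfl : LowerSemicontinuous f) (hfc : EConvex f)
    {z : X} {b : ℝ} (hb : (b : EReal) < f z) :
    ∃ q : WeakDual ℝ X, fconj f q ≤ ((q z - b : ℝ) : EReal) := by
  obtain ⟨q0, s, u, hs0, hkey, hz⟩ := sep_epi hf hfl hfc hb
  rcases lt_or_eq_of_le hs0 with hs | hs
  · refine ⟨(-s)⁻¹ • q0, (conj_bound_of_neg hf.1 hs hkey).trans ?_⟩
    apply EReal.coe_le_coe_iff.mpr
    have hpos : 0 < (-s)⁻¹ := inv_pos.mpr (by linarith)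
    have hsne : s ≠ 0 := ne_of_lt hs
    have hinv : (-s)⁻¹ * s = -1 := by
      rw [inv_mul_eq_div, div_eq_iff (show (-s) ≠ 0 by linarith)]; ring
    have h4 : (-s)⁻¹ * (q0 z + s * b) = (-s)⁻¹ * q0 z - b := by
      calc (-s)⁻¹ * (q0 z + s * b) = (-s)⁻¹ * q0 z + ((-s)⁻¹ * s) * b := by ring
        _ = (-s)⁻¹ * q0 z - b := by rw [hinv]; ring
    have h2 := mul_le_mul_of_nonneg_left hz.le hpos.le
    rw [h4] at h2
    show (-s)⁻¹ * u ≤ (-s)⁻¹ * q0 z - b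
    linarith
  · obtain ⟨qb, c, hqb⟩ := fm0 hf hfl hfc
    have hkey0 : ∀ x (rx : ℝ), f x = (rx : EReal) → q0 x < u := by
      intro x rx hx
      have h := hkey x rx hx
      rw [hs, zero_mul, add_zero] at h
      exact h
    have hzu : u < q0 z := by
      have h := hz
      rw [hs, zero_mul, add_zero] at h
      exact h
    set μ : ℝ := max 1 ((c + b - qb z) / (q0 z - u)) with hμ
    have hμ1 : (1 : ℝ) ≤ μ := le_max_left _ _
    have hμpos : 0 < μ := by linarith
    have hμ2 : (c + b - qb z) / (q0 z - u) ≤ μ := le_max_right _ _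
    have hqzu : 0 < q0 z - u := by linarith
    have hbound : c + b - qb z ≤ μ * (q0 z - u) := by
      calc c + b - qb z = ((c + b - qb z) / (q0 z - u)) * (q0 z - u) := by
            field_simp
        _ ≤ μ * (q0 z - u) := mul_le_mul_of_nonneg_right hμ2 hqzu.le
    refine ⟨qb + μ • q0, ?_⟩
    have hc : fconj f (qb + μ • q0) ≤ ((c + μ * u : ℝ) : EReal) := by
      refine fconj_le_coe hf.1 ?_
      intro x rx hx
      have h1 : qb x - rx ≤ c := young_real hx hqb
      have h2 : q0 x < u := hkey0 x rx hx
      show qb x + μ * q0 x - rx ≤ c + μ * u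
      nlinarith [mul_le_mul_of_nonneg_left h2.le hμpos.le]
    refine hc.trans (EReal.coe_le_coe_iff.mpr ?_)
    show c + μ * u ≤ qb z + μ * q0 z - b
    nlinarith [hbound]

lemma f_le_of_conj_ge {f : X → EReal} (hf : EProper f) (hfl : LowerSemicontinuous f)
    (hfc : EConvex f) {z : X} {c : ℝ}
    (h : ∀ q : WeakDual ℝ X, ((q z + c : ℝ) : EReal) ≤ fconj f q) :
    f z ≤ ((-c : ℝ) : EReal) := by
  by_contra hcon
  push_neg at hcon
  rcases EReal.exists_between_coe_real hcon with ⟨b, hb1, hb2⟩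
  obtain ⟨q, hq⟩ := fm hf hfl hfc hb2
  have h1 := (h q).trans hq
  have h2 := EReal.coe_le_coe_iff.mp h1
  have hb1' := EReal.coe_lt_coe_iff.mp hb1
  linarith

/-! ### Continuous linear functionals on the weak* dual are evaluations -/

lemma weakdual_eval (ψ : WeakDual ℝ X →L[ℝ] ℝ) : ∃ x : X, ∀ q : WeakDual ℝ X, ψ q = q x := by
  classical
  have hcont : ψ ⁻¹' (Metric.ball (0 : ℝ) 1) ∈ 𝓝 (0 : WeakDual ℝ X) := by
    apply ψ.continuous.continuousAt.preimage_mem_nhds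
    rw [map_zero]
    exact Metric.ball_mem_nhds (0 : ℝ) one_pos
  have hbasis := LinearMap.hasBasis_weakBilin (topDualPairing ℝ X)
  obtain ⟨U, hU, hUsub⟩ := hbasis.mem_iff.mp hcont
  obtain ⟨sF, rr, hrr, hUeq⟩ := (SeminormFamily.basisSets_iff _).mp hU
  have hker : ∀ q : WeakDual ℝ X, (∀ i ∈ sF, q i = 0) → ψ q = 0 := by
    intro q hq
    by_contra hψ
    have hsc : ∀ cc : ℝ, |cc * ψ q| < 1 := by
      intro cc
      have hmem : cc • q ∈ U := by
        rw [hUeq]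
        refine (Seminorm.mem_ball_zero _).mpr ?_
        refine Seminorm.finset_sup_apply_lt hrr ?_
        intro i hi
        show ‖(cc • q) i‖ < rr
        have hqz : (cc • q) i = 0 := by
          show cc * q i = 0
          rw [hq i hi, mul_zero]
        show ‖(cc • q) i‖ < rr
        rw [hqz]
        simpa using hrr
      have : cc • q ∈ ψ ⁻¹' Metric.ball (0 : ℝ) 1 := hUsub hmem
      simp only [Set.mem_preimage, Metric.mem_ball, Real.dist_eq, sub_zero, map_smul,
        smul_eq_mul] at this
      exact this
    have h2 := hsc (ψ q)⁻¹
    rw [inv_mul_cancel₀ hψ] at h2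
    simp at h2
  let L : sF → (WeakDual ℝ X) →ₗ[ℝ] ℝ := fun i =>
    { toFun := fun q => q (i : X)
      map_add' := fun q q' => rfl
      map_smul' := fun cc q => rfl }
  have hL : ∀ (i : sF) (q : WeakDual ℝ X), L i q = q (i : X) := fun _ _ => rfl
  have hK : ⨅ i, LinearMap.ker (L i) ≤ LinearMap.ker (ψ : WeakDual ℝ X →ₗ[ℝ] ℝ) := by
    intro q hq
    simp only [Submodule.mem_iInf, LinearMap.mem_ker] at hq ⊢
    exact hker q (fun i hi => hq ⟨i, hi⟩)
  have hspan := mem_span_of_iInf_ker_le_ker hK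
  obtain ⟨cf, hcf⟩ := (Submodule.mem_span_range_iff_exists_fun ℝ).mp hspan
  refine ⟨∑ i, cf i • (i : X), fun q => ?_⟩
  have h1 : ψ q = (∑ i, cf i • L i) q := by rw [hcf]; rfl
  rw [h1]
  rw [LinearMap.sum_apply]
  have h2 : ∀ i : sF, (cf i • L i) q = cf i * q (i : X) := fun i => rfl
  calc (∑ i, (cf i • L i) q) = ∑ i, cf i * q (i : X) := by
        exact Finset.sum_congr rfl (fun i _ => h2 i)
    _ = q (∑ i, cf i • (i : X)) := by
        rw [map_sum]
        refine Finset.sum_congr rfl (fun i _ => ?_)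
        rw [map_smul, smul_eq_mul]

/-! ### Convexity of conjugate epigraphs -/

lemma convex_epiConj {f : X → EReal} (hfb : ∀ x, f x ≠ ⊥) : Convex ℝ (epiConj f) := by
  rintro ⟨q, t⟩ hq ⟨q', t'⟩ hq' a b ha hb hab
  have hq1 : fconj f q ≤ (t : EReal) := hq
  have hq2 : fconj f q' ≤ (t' : EReal) := hq'
  show fconj f (a • q + b • q') ≤ ((a * t + b * t' : ℝ) : EReal)
  refine fconj_le_coe hfb ?_
  intro x rx hx
  have h1 : q x - rx ≤ t := young_real hx hq1
  have h2 : q' x - rx ≤ t' := young_real hx hq2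
  show a * q x + b * q' x - rx ≤ a * t + b * t'
  have e : a * (q x - rx) + b * (q' x - rx) = a * q x + b * q' x - (a + b) * rx := by ring
  rw [hab, one_mul] at e
  have hsum := add_le_add (mul_le_mul_of_nonneg_left h1 ha) (mul_le_mul_of_nonneg_left h2 hb)
  linarith [hsum, e]

/-! ### Membership lemmas for the ε-subdifferential -/

lemma mem_epsSubdiff_of {f : X → EReal} (hfb : ∀ x, f x ≠ ⊥) {x0 : X} {a ε t1 : ℝ}
    {q : WeakDual ℝ X} (ha : f x0 = (a : EReal)) (ht : fconj f q ≤ (t1 : EReal))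
    (hle : t1 - q x0 + a ≤ ε) : q ∈ epsSubdiff f ε x0 := by
  refine ⟨by rw [ha]; exact EReal.coe_ne_top a, by rw [ha]; exact EReal.coe_ne_bot a, ?_⟩
  intro y
  rw [ha, map_sub]
  rcases ereal_cases (f y) (hfb y) with hy | ⟨ry, hy⟩
  · rw [hy, EReal.top_add_coe]
    exact le_top
  · rw [hy]
    have hyoung : q y - ry ≤ t1 := young_real hy ht
    rw [← EReal.coe_add, ← EReal.coe_add]
    exact EReal.coe_le_coe_iff.mpr (by linarith)

lemma epsSubdiff_conj_bound {f : X → EReal} (hfb : ∀ x, f x ≠ ⊥) {x0 : X} {a ε : ℝ}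
    {q : WeakDual ℝ X} (ha : f x0 = (a : EReal)) (hq : q ∈ epsSubdiff f ε x0) :
    fconj f q ≤ ((q x0 - a + ε : ℝ) : EReal) := by
  refine fconj_le_coe hfb ?_
  intro y ry hy
  have h := hq.2.2 y
  rw [ha, hy, map_sub, ← EReal.coe_add, ← EReal.coe_add] at h
  have h2 := EReal.coe_le_coe_iff.mp h
  linarith

/-! ### The key closure lemma -/

instance : LocallyConvexSpace ℝ (WeakDual ℝ X) :=
  WeakBilin.locallyConvexSpace (B := topDualPairing ℝ X)

set_option maxHeartbeats 1000000 in
lemma mem_closure_epiSum (f g : X → EReal) (hf : EProper f) (hg : EProper g)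
    (hfl : LowerSemicontinuous f) (hgl : LowerSemicontinuous g)
    (hfc : EConvex f) (hgc : EConvex g)
    {x0 : X} {a0 c0 : ℝ} (ha0 : f x0 = (a0 : EReal)) (hc0 : g x0 = (c0 : EReal))
    {p : WeakDual ℝ X} {r : ℝ} (hr : fconj (fun y => f y + g y) p < (r : EReal)) :
    ((p, r) : WeakDual ℝ X × ℝ) ∈ closure (epiConj f + epiConj g) := by
  by_contra hnot
  set E : Set (WeakDual ℝ X × ℝ) := epiConj f + epiConj g with hE
  have hconv : Convex ℝ (closure E) := ((convex_epiConj hf.1).add (convex_epiConj hg.1)).closure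
  obtain ⟨Φ, u, hΦ1, hΦ2⟩ := geometric_hahn_banach_closed_point hconv isClosed_closure hnot
  set s : ℝ := Φ (0, 1) with hs
  set ψ : WeakDual ℝ X →L[ℝ] ℝ := Φ.comp (ContinuousLinearMap.inl ℝ _ ℝ) with hψ
  obtain ⟨xb, hxb⟩ := weakdual_eval ψ
  have hdec : ∀ (q : WeakDual ℝ X) (t : ℝ), Φ (q, t) = q xb + s * t := by
    intro q t
    have h1 : ((q, t) : WeakDual ℝ X × ℝ) = (q, 0) + t • (0, 1) := by simp [Prod.ext_iff]
    rw [h1, map_add, map_smul, smul_eq_mul]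
    have h2 : Φ (q, 0) = ψ q := rfl
    rw [h2, hxb, mul_comm]
  have hEmem : ∀ (q1 : WeakDual ℝ X) (t1 : ℝ) (q2 : WeakDual ℝ X) (t2 : ℝ),
      fconj f q1 ≤ (t1 : EReal) → fconj g q2 ≤ (t2 : EReal) →
      (q1 + q2) xb + s * (t1 + t2) < u := by
    intro q1 t1 q2 t2 h1 h2
    have hm : ((q1 + q2, t1 + t2) : WeakDual ℝ X × ℝ) ∈ E :=
      Set.add_mem_add (show ((q1, t1) : WeakDual ℝ X × ℝ) ∈ epiConj f from h1)
        (show ((q2, t2) : WeakDual ℝ X × ℝ) ∈ epiConj g from h2)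
    have h3 := hΦ1 _ (subset_closure hm)
    rwa [hdec] at h3
  obtain ⟨qf, cf, hqf⟩ := fm0 hf hfl hfc
  obtain ⟨qg, cg, hqg⟩ := fm0 hg hgl hgc
  have hs0 : s ≤ 0 := by
    by_contra hsp
    push_neg at hsp
    set A : ℝ := (qf + qg) xb with hA
    set n : ℝ := max 0 ((u - (A + s * (cf + cg))) / s) + 1 with hn
    have hn0 : 0 ≤ n - 1 := by
      rw [hn]
      have := le_max_left (0:ℝ) ((u - (A + s * (cf + cg))) / s)
      linarith
    have hn1 : (u - (A + s * (cf + cg))) / s ≤ n - 1 := by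
      rw [hn]
      have := le_max_right (0:ℝ) ((u - (A + s * (cf + cg))) / s)
      linarith
    have h1 := hEmem qf cf qg (cg + n) hqf
      (hqg.trans (EReal.coe_le_coe_iff.mpr (by linarith)))
    have hdiv : s * ((u - (A + s * (cf + cg))) / s) = u - (A + s * (cf + cg)) :=
      mul_div_cancel₀ _ (ne_of_gt hsp)
    have hmul := mul_le_mul_of_nonneg_left hn1 hsp.le
    rw [hdiv, hA] at hmul
    nlinarith [h1, hmul, hsp]
  obtain ⟨x', s', u', hs'neg, hE', hpr'⟩ :
      ∃ (x' : X) (s' u' : ℝ), s' < 0 ∧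
        (∀ (q1 : WeakDual ℝ X) (t1 : ℝ) (q2 : WeakDual ℝ X) (t2 : ℝ),
          fconj f q1 ≤ (t1 : EReal) → fconj g q2 ≤ (t2 : EReal) →
          (q1 + q2) x' + s' * (t1 + t2) < u') ∧ u' < p x' + s' * r := by
    rcases lt_or_eq_of_le hs0 with hneg | hzero
    · refine ⟨xb, s, u, hneg, hEmem, ?_⟩
      have h := hΦ2
      rw [hdec p r] at h
      exact h
    · have hG : 0 < p xb - u := by
        have h := hΦ2
        rw [hdec p r, hzero, zero_mul, add_zero] at h
        linarith
      set D : ℝ := r - p x0 + a0 + c0 with hD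
      set μ : ℝ := if D ≤ 0 then 1 else (p xb - u) / (2 * D) with hμdef
      have hμpos : 0 < μ := by
        rw [hμdef]; split_ifs with h
        · norm_num
        · push_neg at h; positivity
      have hμD : μ * D < p xb - u := by
        rw [hμdef]; split_ifs with h
        · nlinarith
        · push_neg at h
          have heq : (p xb - u) / (2 * D) * D = (p xb - u) / 2 := by
            field_simp
          rw [heq]; linarith
      refine ⟨xb + μ • x0, -μ, u + μ * (a0 + c0), by linarith, ?_, ?_⟩
      · intro q1 t1 q2 t2 h1 h2
        have hbase := hEmem q1 t1 q2 t2 h1 h2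
        rw [hzero, zero_mul, add_zero] at hbase
        have hy1 : q1 x0 - a0 ≤ t1 := young_real ha0 h1
        have hy2 : q2 x0 - c0 ≤ t2 := young_real hc0 h2
        have happ : (q1 + q2) (xb + μ • x0) = (q1 + q2) xb + μ * ((q1 + q2) x0) := by
          rw [map_add, map_smul, smul_eq_mul]
        rw [happ]
        have hadd : (q1 + q2) x0 = q1 x0 + q2 x0 := rfl
        rw [hadd]
        nlinarith [mul_le_mul_of_nonneg_left hy1 hμpos.le,
          mul_le_mul_of_nonneg_left hy2 hμpos.le]
      · have happ : p (xb + μ • x0) = p xb + μ * p x0 := by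
          rw [map_add, map_smul, smul_eq_mul]
        rw [happ]
        nlinarith [hμD, hD]
  set ν : ℝ := (-s')⁻¹ with hν
  have hνpos : 0 < ν := inv_pos.mpr (by linarith)
  have hνs : ν * s' = -1 := by
    rw [hν, inv_mul_eq_div, div_eq_iff (show (-s') ≠ 0 by linarith)]; ring
  set z : X := ν • x' with hz
  have hzapp : ∀ q : WeakDual ℝ X, q z = ν * q x' := fun q => by
    rw [hz, map_smul, smul_eq_mul]
  set u'' : ℝ := ν * u' with hu''
  have hmain : ∀ (q1 : WeakDual ℝ X) (t1 : ℝ) (q2 : WeakDual ℝ X) (t2 : ℝ),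
      fconj f q1 ≤ (t1 : EReal) → fconj g q2 ≤ (t2 : EReal) →
      q1 z + q2 z - t1 - t2 < u'' := by
    intro q1 t1 q2 t2 h1 h2
    have hb := hE' q1 t1 q2 t2 h1 h2
    have h3 := mul_lt_mul_of_pos_left hb hνpos
    have hadd : (q1 + q2) x' = q1 x' + q2 x' := rfl
    rw [hadd] at h3
    have h5 : ν * (q1 x' + q2 x' + s' * (t1 + t2)) =
        ν * q1 x' + ν * q2 x' + (ν * s') * (t1 + t2) := by ring
    rw [h5, hνs] at h3
    rw [hzapp, hzapp, hu'']
    linarith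
  have hru : u'' < p z - r := by
    have h3 := mul_lt_mul_of_pos_left hpr' hνpos
    have h5 : ν * (p x' + s' * r) = ν * p x' + (ν * s') * r := by ring
    rw [h5, hνs] at h3
    rw [hzapp, hu'']
    linarith
  have claim1 : ∀ (q2 : WeakDual ℝ X) (t2 : ℝ), fconj g q2 ≤ (t2 : EReal) →
      f z ≤ ((t2 + u'' - q2 z : ℝ) : EReal) := by
    intro q2 t2 h2
    have hkey : ∀ q1 : WeakDual ℝ X, ((q1 z + (q2 z - t2 - u'') : ℝ) : EReal) ≤ fconj f q1 := by
      intro q1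
      by_contra hcon
      push_neg at hcon
      have hnb : fconj f q1 ≠ ⊥ := fconj_ne_bot ha0 q1
      have hnt : fconj f q1 ≠ ⊤ := hcon.ne_top
      rcases ereal_cases _ hnb with h | ⟨t1, ht1⟩
      · exact absurd h hnt
      have h1 : fconj f q1 ≤ (t1 : EReal) := le_of_eq ht1
      have hm := hmain q1 t1 q2 t2 h1 h2
      have ht1lt : t1 < q1 z + (q2 z - t2 - u'') := by
        rw [ht1] at hcon
        exact EReal.coe_lt_coe_iff.mp hcon
      linarith
    have h := f_le_of_conj_ge hf hfl hfc hkey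
    have heq : (-(q2 z - t2 - u'') : ℝ) = t2 + u'' - q2 z := by ring
    rwa [heq] at h
  have hfz := claim1 qg cg hqg
  have hfzt : f z ≠ ⊤ := by
    intro h
    rw [h] at hfz
    exact (EReal.coe_ne_top _) (top_le_iff.mp hfz)
  rcases ereal_cases (f z) (hf.1 z) with h | ⟨az, haz⟩
  · exact absurd h hfzt
  have claim2 : ∀ q2 : WeakDual ℝ X, ((q2 z + (az - u'') : ℝ) : EReal) ≤ fconj g q2 := by
    intro q2
    by_contra hcon
    push_neg at hcon
    have hnb : fconj g q2 ≠ ⊥ := fconj_ne_bot hc0 q2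
    have hnt : fconj g q2 ≠ ⊤ := hcon.ne_top
    rcases ereal_cases _ hnb with h | ⟨t2, ht2⟩
    · exact absurd h hnt
    have h2 : fconj g q2 ≤ (t2 : EReal) := le_of_eq ht2
    have h3 := claim1 q2 t2 h2
    rw [haz] at h3
    have h4 := EReal.coe_le_coe_iff.mp h3
    have h5 : t2 < q2 z + (az - u'') := by
      rw [ht2] at hcon
      exact EReal.coe_lt_coe_iff.mp hcon
    linarith
  have hgz := f_le_of_conj_ge hg hgl hgc claim2
  have hsum : f z + g z ≤ ((u'' : ℝ) : EReal) := by
    rw [haz]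
    calc (az : EReal) + g z ≤ (az : EReal) + ((-(az - u'') : ℝ) : EReal) :=
          add_le_add_right hgz _
      _ = ((u'' : ℝ) : EReal) := by
          rw [← EReal.coe_add]
          congr 1
          ring
  have hfinal : (r : EReal) < fconj (fun y => f y + g y) p := by
    have h1 : (p z : EReal) - (f z + g z) ≤ fconj (fun y => f y + g y) p :=
      le_fconj (fun y => f y + g y) p z
    have h2 : ((p z - u'' : ℝ) : EReal) ≤ (p z : EReal) - (f z + g z) := by
      rw [EReal.coe_sub]
      exact EReal.sub_le_sub (le_refl _) hsum
    have h3 : (r : EReal) < ((p z - u'' : ℝ) : EReal) :=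
      EReal.coe_lt_coe_iff.mpr (by linarith)
    exact h3.trans_le (h2.trans h1)
  exact absurd (hr.trans hfinal) (lt_irrefl _)

end Aux

set_option maxHeartbeats 1000000 in
theorem stmt5 {X : Type*} [NormedAddCommGroup X] [NormedSpace ℝ X] [CompleteSpace X]
    (f g : X → EReal) (hf : EProper f) (hg : EProper g)
    (hfl : LowerSemicontinuous f) (hgl : LowerSemicontinuous g)
    (hfc : EConvex f) (hgc : EConvex g)
    (hdom : (edom f ∩ edom g).Nonempty)
    (hcl : ∀ x ∈ edom f ∩ edom g, ∀ ε > (0 : ℝ),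
      IsClosed (epsSubdiff f ε x + epsSubdiff g ε x)) :
    (∀ p : WeakDual ℝ X,
      fconj (fun y => f y + g y) p = ⨅ q : WeakDual ℝ X, fconj f q + fconj g (p - q)) ∧
    (⨅ x : X, (f x + g x)) = ⨆ p : WeakDual ℝ X, (-(fconj f p) - fconj g (-p)) := by
  obtain ⟨x0, hx0f, hx0g⟩ := hdom
  have hx0f' : f x0 ≠ ⊤ := LT.lt.ne hx0f
  have hx0g' : g x0 ≠ ⊤ := LT.lt.ne hx0g
  rcases ereal_cases (f x0) (hf.1 x0) with h | ⟨a0, ha0⟩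
  · exact absurd h hx0f'
  rcases ereal_cases (g x0) (hg.1 x0) with h | ⟨c0, hc0⟩
  · exact absurd h hx0g'
  have hsum0 : (fun y => f y + g y) x0 = ((a0 + c0 : ℝ) : EReal) := by
    show f x0 + g x0 = ((a0 + c0 : ℝ) : EReal)
    rw [ha0, hc0, EReal.coe_add]
  have hfg_ne_bot : ∀ pp : WeakDual ℝ X, fconj (fun y => f y + g y) pp ≠ ⊥ := fun pp =>
    fconj_ne_bot (f := fun y => f y + g y) (x0 := x0) (r0 := a0 + c0) hsum0 pp
  have main : ∀ p : WeakDual ℝ X,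
      fconj (fun y => f y + g y) p = ⨅ q : WeakDual ℝ X, fconj f q + fconj g (p - q) := by
    intro p
    have hle : fconj (fun y => f y + g y) p ≤ ⨅ q : WeakDual ℝ X, fconj f q + fconj g (p - q) := by
      refine le_iInf fun q => ?_
      refine iSup_le fun x => ?_
      rcases ereal_cases (f x) (hf.1 x) with hx | ⟨ax, hax⟩
      · have h1 : f x + g x = ⊤ := by rw [hx]; exact EReal.top_add_of_ne_bot (hg.1 x)
        show (p x : EReal) - (f x + g x) ≤ _
        rw [h1, EReal.sub_top]
        exact bot_le
      rcases ereal_cases (g x) (hg.1 x) with hx | ⟨cx, hcx⟩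
      · have h1 : f x + g x = ⊤ := by rw [hx]; exact EReal.add_top_of_ne_bot (hf.1 x)
        show (p x : EReal) - (f x + g x) ≤ _
        rw [h1, EReal.sub_top]
        exact bot_le
      · have h1 : ((q x - ax : ℝ) : EReal) ≤ fconj f q := by
          have h := le_fconj f q x
          rwa [hax, ← EReal.coe_sub] at h
        have h2 : (((p - q) x - cx : ℝ) : EReal) ≤ fconj g (p - q) := by
          have h := le_fconj g (p - q) x
          rwa [hcx, ← EReal.coe_sub] at h
        have h3 := add_le_add h1 h2
        rw [← EReal.coe_add] at h3
        refine le_trans ?_ h3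
        show (p x : EReal) - (f x + g x) ≤ _
        rw [hax, hcx, ← EReal.coe_add, ← EReal.coe_sub]
        refine EReal.coe_le_coe_iff.mpr ?_
        have h4 : (p - q) x = p x - q x := rfl
        rw [h4]
        ring_nf
        linarith
    rcases ereal_cases _ (hfg_ne_bot p) with htop | ⟨αr, hα⟩
    · rw [htop]
      exact (top_le_iff.mp (htop ▸ hle)).symm
    · refine le_antisymm hle ?_
      rw [hα]
      refine le_coe_of_forall_lt fun ε' hε' => ?_
      set δ : ℝ := ε' / 6 with hδ
      have hδpos : 0 < δ := by positivity
      have hup : ((αr - δ : ℝ) : EReal) < fconj (fun y => f y + g y) p := by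
        rw [hα]
        exact EReal.coe_lt_coe_iff.mpr (by linarith)
      obtain ⟨x1, hx1⟩ := lt_iSup_iff.mp hup
      have hx1' : ((αr - δ : ℝ) : EReal) < (p x1 : EReal) - (f x1 + g x1) := hx1
      clear hx1
      rcases ereal_cases (f x1) (hf.1 x1) with hfx1 | ⟨a1, ha1⟩
      · rw [show f x1 + g x1 = ⊤ by rw [hfx1]; exact EReal.top_add_of_ne_bot (hg.1 x1),
          EReal.sub_top] at hx1'
        exact absurd hx1' not_lt_bot
      rcases ereal_cases (g x1) (hg.1 x1) with hgx1 | ⟨c1, hc1⟩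
      · rw [show f x1 + g x1 = ⊤ by rw [hgx1]; exact EReal.add_top_of_ne_bot (hf.1 x1),
          EReal.sub_top] at hx1'
        exact absurd hx1' not_lt_bot
      have hx1R : αr - δ < p x1 - (a1 + c1) := by
        rw [ha1, hc1, ← EReal.coe_add, ← EReal.coe_sub] at hx1'
        exact EReal.coe_lt_coe_iff.mp hx1'
      have hx1dom : x1 ∈ edom f ∩ edom g := by
        constructor
        · show f x1 < ⊤
          rw [ha1]; exact EReal.coe_lt_top _
        · show g x1 < ⊤
          rw [hc1]; exact EReal.coe_lt_top _
      have hx1le : p x1 - (a1 + c1) ≤ αr := by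
        have h : (p x1 : EReal) - (f x1 + g x1) ≤ fconj (fun y => f y + g y) p :=
          le_fconj (fun y => f y + g y) p x1
        rw [hα, ha1, hc1, ← EReal.coe_add, ← EReal.coe_sub] at h
        exact EReal.coe_le_coe_iff.mp h
      set r : ℝ := αr + δ with hrdef
      have hrlt : fconj (fun y => f y + g y) p < (r : EReal) := by
        rw [hα]
        exact EReal.coe_lt_coe_iff.mpr (by linarith)
      have hclmem := mem_closure_epiSum f g hf hg hfl hgl hfc hgc ha0 hc0 hrlt
      set ε : ℝ := r - p x1 + a1 + c1 + δ with hεdef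
      have hεpos : 0 < ε := by
        rw [hεdef, hrdef]
        linarith
      have hεlt : ε < 3 * δ := by
        rw [hεdef, hrdef]
        linarith
      have hmemS : p ∈ epsSubdiff f ε x1 + epsSubdiff g ε x1 := by
        have hclosed := hcl x1 hx1dom ε hεpos
        rw [← hclosed.closure_eq]
        rw [mem_closure_iff]
        intro O hO hpO
        set V : Set (WeakDual ℝ X × ℝ) := {w | w.2 - w.1 x1 < r - p x1 + δ} with hV
        have hVopen : IsOpen V := by
          have hcont : Continuous fun w : WeakDual ℝ X × ℝ => w.2 - w.1 x1 :=
            continuous_snd.sub ((WeakDual.eval_continuous x1).comp continuous_fst)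
          exact isOpen_lt hcont continuous_const
        have hUopen := (hO.prod isOpen_univ).inter hVopen
        have hpU : ((p, r) : WeakDual ℝ X × ℝ) ∈ (O ×ˢ univ) ∩ V := by
          refine ⟨⟨hpO, mem_univ _⟩, ?_⟩
          show r - p x1 < r - p x1 + δ
          linarith
        obtain ⟨w, hwU, hwE⟩ := (mem_closure_iff.mp hclmem) _ hUopen hpU
        rcases hwE with ⟨w1, hw1, w2, hw2, hwsum⟩
        subst hwsum
        have hw1' : fconj f w1.1 ≤ (w1.2 : EReal) := hw1
        have hw2' : fconj g w2.1 ≤ (w2.2 : EReal) := hw2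
        refine ⟨(w1 + w2).1, hwU.1.1, ?_⟩
        have e1 : (w1 + w2).2 = w1.2 + w2.2 := rfl
        have e2 : (w1 + w2).1 x1 = w1.1 x1 + w2.1 x1 := rfl
        have hwV : (w1 + w2).2 - (w1 + w2).1 x1 < r - p x1 + δ := hwU.2
        rw [e1, e2] at hwV
        have hε1 : 0 ≤ w1.2 - w1.1 x1 + a1 := by
          have h := young_real ha1 hw1'
          linarith
        have hε2 : 0 ≤ w2.2 - w2.1 x1 + c1 := by
          have h := young_real hc1 hw2'
          linarith
        have h1m : w1.1 ∈ epsSubdiff f ε x1 :=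
          mem_epsSubdiff_of hf.1 ha1 hw1' (by rw [hεdef]; linarith)
        have h2m : w2.1 ∈ epsSubdiff g ε x1 :=
          mem_epsSubdiff_of hg.1 hc1 hw2' (by rw [hεdef]; linarith)
        exact Set.add_mem_add h1m h2m
      rcases Set.mem_add.mp hmemS with ⟨q1, hq1, q2, hq2, hq12⟩
      have hb1 := epsSubdiff_conj_bound hf.1 ha1 hq1
      have hb2 := epsSubdiff_conj_bound hg.1 hc1 hq2
      have hpq : p - q1 = q2 := by rw [← hq12]; abel
      have hstep : (⨅ q : WeakDual ℝ X, fconj f q + fconj g (p - q)) ≤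
          fconj f q1 + fconj g (p - q1) := iInf_le _ q1
      refine hstep.trans ?_
      rw [hpq]
      refine le_trans (add_le_add hb1 hb2) ?_
      rw [← EReal.coe_add]
      refine EReal.coe_le_coe_iff.mpr ?_
      have hq12app : q1 x1 + q2 x1 = p x1 := by rw [← hq12]; rfl
      linarith
  refine ⟨main, ?_⟩
  have h0 := main 0
  have hzeroapp : ∀ x : X, ((0 : WeakDual ℝ X) x : EReal) = (0 : EReal) := by
    intro x
    have : (0 : WeakDual ℝ X) x = 0 := rfl
    rw [this, EReal.coe_zero]
  have hconj0 : fconj (fun y => f y + g y) (0 : WeakDual ℝ X) = -(⨅ x, (f x + g x)) := by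
    rw [ereal_neg_iInf]
    unfold fconj
    refine iSup_congr fun x => ?_
    rw [hzeroapp x, zero_sub]
  have h2 : (⨅ x, (f x + g x)) = -(⨅ q : WeakDual ℝ X, fconj f q + fconj g (0 - q)) := by
    rw [← h0, hconj0, neg_neg]
  rw [h2, ereal_neg_iInf]
  refine iSup_congr fun q => ?_
  rw [zero_sub]
  rw [ereal_neg_add (fconj_ne_bot ha0 q) (fconj_ne_bot hc0 (-q))]
  rw [sub_eq_add_neg]
end
end
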